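/- Suppose X_1, …, X_n and Y_1, …, Y_n are {0,1}-valued random variables such that Y_1, …, Y_n are independent and for each i, almost surely 𝔼[X_i ∣ X_1, …, X_{i−1}] ≤ 𝔼[Y_i]. Let X = Σ_{i=1}^n X_i and Y = Σ_{i=1}^n Y_i. Then for every t ≥ 0 we have ℙ(X ≥ t) ≤ ℙ(Y ≥ t). -/

import Mathlib

open MeasureTheory ProbabilityTheory
open scoped ENNReal

section Aux

variable {α : Type*} [MeasurableSpace α] {μ : Measure α} [IsProbabilityMeasure μ]

lemma aux_eq_indicator (f : α → ℝ) (h01 : ∀ a, f a = 0 ∨ f a = 1) :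
    f = (f ⁻¹' {1}).indicator 1 := by
  funext a
  rcases h01 a with h | h <;>
    simp [Set.indicator_apply, Set.mem_preimage, h]

lemma aux_integrable (f : α → ℝ) (h01 : ∀ a, f a = 0 ∨ f a = 1)
    (hf : Measurable f) : Integrable f μ := by
  rw [aux_eq_indicator f h01]
  exact (integrable_const (1 : ℝ)).indicator (hf (measurableSet_singleton 1))

lemma aux_indicator_split (S Z : α → ℝ) (hZ : ∀ a, Z a = 0 ∨ Z a = 1) (t : ℝ) (a : α) :
    Set.indicator {x | t ≤ S x + Z x} 1 a
      = Set.indicator {x | t ≤ S x} 1 a + Set.indicator (S ⁻¹' Set.Ico (t - 1) t) Z a := by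
  rcases hZ a with h | h <;>
    by_cases h1 : t ≤ S a <;> by_cases h2 : t - 1 ≤ S a <;>
    simp_all [Set.indicator_apply, Set.mem_setOf_eq, Set.mem_preimage, Set.mem_Ico] <;>
    first
      | rfl
      | linarith
      | (intro h3; linarith)
      | (exact fun h3 => absurd (by linarith) h1)

/-- Decomposition of the tail probability when adding a `{0,1}`-valued variable. -/
lemma aux_decomp (S Z : α → ℝ) (hS : Measurable S) (hZmeas : Measurable Z)
    (hZ : ∀ a, Z a = 0 ∨ Z a = 1) (t : ℝ) :
    (μ {x | t ≤ S x + Z x}).toReal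
      = (μ {x | t ≤ S x}).toReal
        + ∫ a, Set.indicator (S ⁻¹' Set.Ico (t - 1) t) Z a ∂μ := by
  have hmeas1 : MeasurableSet {x | t ≤ S x + Z x} :=
    measurableSet_le measurable_const (hS.add hZmeas)
  have hmeas2 : MeasurableSet {x | t ≤ S x} := measurableSet_le measurable_const hS
  have hmeasF : MeasurableSet (S ⁻¹' Set.Ico (t - 1) t) := hS measurableSet_Ico
  rw [← measureReal_def, ← measureReal_def, ← integral_indicator_one hmeas1, ← integral_indicator_one hmeas2]
  have : ∀ a, Set.indicator {x | t ≤ S x + Z x} (1 : α → ℝ) a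
      = Set.indicator {x | t ≤ S x} (1 : α → ℝ) a
        + Set.indicator (S ⁻¹' Set.Ico (t - 1) t) Z a :=
    aux_indicator_split S Z hZ t
  calc ∫ a, Set.indicator {x | t ≤ S x + Z x} (1 : α → ℝ) a ∂μ
      = ∫ a, (Set.indicator {x | t ≤ S x} (1 : α → ℝ) a
          + Set.indicator (S ⁻¹' Set.Ico (t - 1) t) Z a) ∂μ := by
        exact integral_congr_ae (Filter.Eventually.of_forall this)
    _ = _ := by
        rw [integral_add]
        · exact (integrable_const (1 : ℝ)).indicator hmeas2
        · exact (aux_integrable Z hZ hZmeas).indicator hmeasF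

lemma aux_diff_toReal (S : α → ℝ) (hS : Measurable S) (t : ℝ) :
    (μ (S ⁻¹' Set.Ico (t - 1) t)).toReal
      = (μ {x | t - 1 ≤ S x}).toReal - (μ {x | t ≤ S x}).toReal := by
  have hsub : {x | t ≤ S x} ⊆ {x | t - 1 ≤ S x} := fun x hx => by
    simp only [Set.mem_setOf_eq] at *; linarith
  have hmeas2 : MeasurableSet {x | t ≤ S x} := measurableSet_le measurable_const hS
  have hset : S ⁻¹' Set.Ico (t - 1) t = {x | t - 1 ≤ S x} \ {x | t ≤ S x} := by
    ext x
    simp [Set.mem_Ico, Set.mem_setOf_eq, not_le]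
  rw [hset, measure_diff hsub hmeas2.nullMeasurableSet (measure_ne_top μ _),
    ENNReal.toReal_sub_of_le (measure_mono hsub) (measure_ne_top μ _)]

lemma aux_measurable_sum' {β : Type*} {ι : Type*} (X : ι → β → ℝ) (m : MeasurableSpace β)
    (s : Finset ι) (h : ∀ j ∈ s, Measurable[m] (X j)) :
    Measurable[m] (fun b => ∑ j ∈ s, X j b) := by
  letI := m
  exact Finset.measurable_sum s h

end Aux

/-- Stochastic domination of a sequence of `{0,1}`-valued random variables whose
conditional means are bounded by the means of independent Bernoulli variables. -/
theorem stmt_18 {Ω Ω' : Type*} [MeasurableSpace Ω] [MeasurableSpace Ω']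
    (μ : Measure Ω) [IsProbabilityMeasure μ]
    (μ' : Measure Ω') [IsProbabilityMeasure μ']
    (n : ℕ) (X : Fin n → Ω → ℝ) (Y : Fin n → Ω' → ℝ)
    (hX01 : ∀ i ω, X i ω = 0 ∨ X i ω = 1)
    (hY01 : ∀ i ω', Y i ω' = 0 ∨ Y i ω' = 1)
    (hXmeas : ∀ i, Measurable (X i))
    (hYmeas : ∀ i, Measurable (Y i))
    (hYindep : ProbabilityTheory.iIndepFun Y μ')
    (hcond : ∀ i : Fin n, ∀ᵐ ω ∂μ,
      (μ[X i | ⨆ j : Fin n, ⨆ _ : (j : ℕ) < (i : ℕ),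
        MeasurableSpace.comap (X j) inferInstance]) ω ≤ ∫ ω', Y i ω' ∂μ') :
    ∀ t : ℝ, 0 ≤ t →
      μ {ω | t ≤ ∑ i, X i ω} ≤ μ' {ω' | t ≤ ∑ i, Y i ω'} := by
  classical
  -- the partial sums
  set s : ℕ → Finset (Fin n) := fun k => Finset.univ.filter (fun j : Fin n => (j : ℕ) < k)
    with hs_def
  have key : ∀ k : ℕ, k ≤ n → ∀ t : ℝ,
      (μ {ω | t ≤ ∑ j ∈ s k, X j ω}).toReal ≤ (μ' {ω' | t ≤ ∑ j ∈ s k, Y j ω'}).toReal := by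
    intro k
    induction k with
    | zero =>
      intro _ t
      have hs0 : s 0 = ∅ := by
        ext j; simp [hs_def]
      simp only [hs0, Finset.sum_empty]
      rcases le_or_gt t 0 with ht | ht
      · have h1 : {ω : Ω | t ≤ (0 : ℝ)} = Set.univ := by ext ω; simp [ht]
        have h2 : {ω' : Ω' | t ≤ (0 : ℝ)} = Set.univ := by ext ω'; simp [ht]
        rw [h1, h2]; simp
      · have h1 : {ω : Ω | t ≤ (0 : ℝ)} = ∅ := by ext ω; simp [not_le.mpr ht]
        have h2 : {ω' : Ω' | t ≤ (0 : ℝ)} = ∅ := by ext ω'; simp [not_le.mpr ht]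
        rw [h1, h2]; simp
    | succ k IH =>
      intro hk1 t
      have hkn : k < n := hk1
      have IH' := IH (le_of_lt hkn)
      set i : Fin n := ⟨k, hkn⟩ with hi_def
      have hi_not_mem : i ∉ s k := by simp [hs_def, hi_def]
      have hs_succ : s (k + 1) = insert i (s k) := by
        ext j
        simp only [hs_def, Finset.mem_filter, Finset.mem_univ, true_and, Finset.mem_insert]
        constructor
        · intro hj
          rcases Nat.lt_succ_iff_lt_or_eq.mp hj with h | h
          · exact Or.inr (by simpa [hs_def] using h)
          · exact Or.inl (by apply Fin.ext; simpa [hi_def] using h)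
        · rintro (rfl | hj)
          · simp [hi_def]
          · exact Nat.lt_succ_of_lt hj
      -- sums split
      have hsumX : ∀ ω, ∑ j ∈ s (k + 1), X j ω = (∑ j ∈ s k, X j ω) + X i ω := by
        intro ω; rw [hs_succ, Finset.sum_insert hi_not_mem]; ring
      have hsumY : ∀ ω', ∑ j ∈ s (k + 1), Y j ω' = (∑ j ∈ s k, Y j ω') + Y i ω' := by
        intro ω'; rw [hs_succ, Finset.sum_insert hi_not_mem]; ring
      set SX : Ω → ℝ := fun ω => ∑ j ∈ s k, X j ω with hSX_def
      set SY : Ω' → ℝ := fun ω' => ∑ j ∈ s k, Y j ω' with hSY_def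
      have hSXmeas : Measurable SX := Finset.measurable_sum _ (fun j _ => hXmeas j)
      have hSYmeas : Measurable SY := Finset.measurable_sum _ (fun j _ => hYmeas j)
      set q : ℝ := ∫ ω', Y i ω' ∂μ' with hq_def
      have hq0 : 0 ≤ q :=
        integral_nonneg (fun ω' => by rcases hY01 i ω' with h | h <;> simp [h])
      have hq1 : q ≤ 1 := by
        calc q ≤ ∫ _ω', (1 : ℝ) ∂μ' := by
              apply integral_mono (aux_integrable _ (hY01 i) (hYmeas i)) (integrable_const 1)
              intro ω'; rcases hY01 i ω' with h | h <;> simp [h]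
          _ = 1 := by simp
      -- rewrite goal with decomposition
      have hgoal_set_X : {ω | t ≤ ∑ j ∈ s (k + 1), X j ω} = {ω | t ≤ SX ω + X i ω} := by
        ext ω; simp [hsumX ω, hSX_def]
      have hgoal_set_Y : {ω' | t ≤ ∑ j ∈ s (k + 1), Y j ω'} = {ω' | t ≤ SY ω' + Y i ω'} := by
        ext ω'; simp [hsumY ω', hSY_def]
      rw [hgoal_set_X, hgoal_set_Y,
        aux_decomp SX (X i) hSXmeas (hXmeas i) (hX01 i) t,
        aux_decomp SY (Y i) hSYmeas (hYmeas i) (hY01 i) t]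
      -- X side: conditional expectation bound
      have hm_le : (⨆ j : Fin n, ⨆ _ : (j : ℕ) < (i : ℕ),
          MeasurableSpace.comap (X j) inferInstance) ≤ (inferInstance : MeasurableSpace Ω) := by
        apply iSup_le; intro j; apply iSup_le; intro _
        exact (hXmeas j).comap_le
      have hSX_m_meas : Measurable[⨆ j : Fin n, ⨆ _ : (j : ℕ) < (i : ℕ),
          MeasurableSpace.comap (X j) inferInstance] SX := by
        apply aux_measurable_sum'
        intro j hj
        have hj' : (j : ℕ) < (i : ℕ) := by
          simpa [hs_def, hi_def] using hj
        exact Measurable.of_comap_le (le_iSup₂ (f := fun (j : Fin n) (_ : (j : ℕ) < (i : ℕ)) =>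
            MeasurableSpace.comap (X j) inferInstance) j hj')
      have hFX_m : MeasurableSet[⨆ j : Fin n, ⨆ _ : (j : ℕ) < (i : ℕ),
          MeasurableSpace.comap (X j) inferInstance] (SX ⁻¹' Set.Ico (t - 1) t) :=
        hSX_m_meas measurableSet_Ico
      have hXint : Integrable (X i) μ := aux_integrable _ (hX01 i) (hXmeas i)
      have hFX : MeasurableSet (SX ⁻¹' Set.Ico (t - 1) t) := hm_le _ hFX_m
      have hXbound : ∫ ω, Set.indicator (SX ⁻¹' Set.Ico (t - 1) t) (X i) ω ∂μ
          ≤ q * (μ (SX ⁻¹' Set.Ico (t - 1) t)).toReal := by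
        rw [integral_indicator hFX]
        calc ∫ ω in SX ⁻¹' Set.Ico (t - 1) t, X i ω ∂μ
            = ∫ ω in SX ⁻¹' Set.Ico (t - 1) t, (μ[X i | ⨆ j : Fin n, ⨆ _ : (j : ℕ) < (i : ℕ),
                MeasurableSpace.comap (X j) inferInstance]) ω ∂μ :=
              (setIntegral_condExp hm_le hXint hFX_m).symm
          _ ≤ ∫ _ω in SX ⁻¹' Set.Ico (t - 1) t, q ∂μ :=
              setIntegral_mono_ae integrable_condExp.integrableOn
                (integrableOn_const (measure_lt_top μ _).ne) (hcond i)
          _ = (μ (SX ⁻¹' Set.Ico (t - 1) t)).toReal * q := by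
              rw [setIntegral_const]; simp [smul_eq_mul, measureReal_def]
          _ = q * (μ (SX ⁻¹' Set.Ico (t - 1) t)).toReal := by ring
      -- Y side: independence
      have hYeq : ∫ ω', Set.indicator (SY ⁻¹' Set.Ico (t - 1) t) (Y i) ω' ∂μ'
          = q * (μ' (SY ⁻¹' Set.Ico (t - 1) t)).toReal := by
        set G : Set Ω' := Y i ⁻¹' {1} with hG_def
        have hGmeas : MeasurableSet G := hYmeas i (measurableSet_singleton 1)
        have hYiG : Y i = G.indicator 1 := aux_eq_indicator _ (hY01 i)
        have hindep : IndepFun SY (Y i) μ' := by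
          have := hYindep.indepFun_finsetSum_of_notMem hYmeas hi_not_mem
          have heq : (∑ j ∈ s k, Y j) = SY := by
            funext ω'; simp [hSY_def, Finset.sum_apply]
          rwa [heq] at this
        have hprod : μ' (SY ⁻¹' Set.Ico (t - 1) t ∩ G)
            = μ' (SY ⁻¹' Set.Ico (t - 1) t) * μ' G := by
          have := hindep.measure_inter_preimage_eq_mul (Set.Ico (t - 1) t) {1}
            measurableSet_Ico (measurableSet_singleton 1)
          simpa [hG_def] using this
        have hqG : q = (μ' G).toReal := by
          rw [hq_def]
          conv_lhs => rw [hYiG]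
          exact integral_indicator_one hGmeas
        calc ∫ ω', Set.indicator (SY ⁻¹' Set.Ico (t - 1) t) (Y i) ω' ∂μ'
            = ∫ ω', Set.indicator (SY ⁻¹' Set.Ico (t - 1) t ∩ G) (1 : Ω' → ℝ) ω' ∂μ' := by
              congr 1
              funext ω'
              rw [hYiG, Set.indicator_indicator]
          _ = (μ' (SY ⁻¹' Set.Ico (t - 1) t ∩ G)).toReal :=
              integral_indicator_one ((hSYmeas measurableSet_Ico).inter hGmeas)
          _ = q * (μ' (SY ⁻¹' Set.Ico (t - 1) t)).toReal := by
              rw [hprod, ENNReal.toReal_mul, hqG]; ring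
      -- put together
      have hdX := aux_diff_toReal (μ := μ) SX hSXmeas t
      have hdY := aux_diff_toReal (μ := μ') SY hSYmeas t
      have hIHt := IH' t
      have hIHt1 := IH' (t - 1)
      rw [hYeq]
      have h1 : (μ {ω | t ≤ SX ω}).toReal ≤ (μ' {ω' | t ≤ SY ω'}).toReal := hIHt
      have h2 : (μ {ω | t - 1 ≤ SX ω}).toReal ≤ (μ' {ω' | t - 1 ≤ SY ω'}).toReal := hIHt1
      nlinarith [hXbound, hdX, hdY, mul_nonneg hq0 (sub_nonneg.mpr h2),
        mul_nonneg (sub_nonneg.mpr hq1) (sub_nonneg.mpr h1)]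
  intro t _
  have hfinal := key n le_rfl t
  have hsn : s n = Finset.univ := by
    ext j; simp [hs_def, j.isLt]
  rw [hsn] at hfinal
  rwa [← ENNReal.toReal_le_toReal (measure_ne_top μ _) (measure_ne_top μ' _)]
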